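/- Let P and N be positive integers (or more generally N any integer) and let a be an integer with 0 < a < P. Then the radial limit lim_{ε→0⁺} ∑_{n=0}^{∞} ψ_{2P}^{(a)}(n) e^{iπn²(N + iε)/(2P)} exists and equals (1 − a/P) e^{iπa²N/(2P)}. -/

import Mathlib

open Complex Finset

open Real MeasureTheory intervalIntegral Filter

noncomputable section

private def wg (c t : ℝ) : ℝ := Real.exp (-c * t^2)
private def phig (c t : ℝ) : ℝ := 2*c*t*Real.exp (-c*t^2)
private def Bg (c t : ℝ) : ℝ := 10*c*Real.exp (-(c/2)*t^2)
private def Dg (c p : ℝ) (k : ℕ) : ℝ := ∫ t in (2*p*(k:ℝ))..(2*p*(k:ℝ)+2*p), Bg c t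

private lemma hasDerivAt_neg_wg (c t : ℝ) : HasDerivAt (fun s => -wg c s) (phig c t) t := by
  have h1 : HasDerivAt (fun s : ℝ => -c * s^2) (-c * (2*t)) t := by
    simpa using (((hasDerivAt_pow 2 t)).const_mul (-c))
  have h2 := h1.exp
  have h3 : HasDerivAt (fun s => -wg c s) (-(Real.exp (-c*t^2) * (-c*(2*t)))) t := h2.neg
  convert h3 using 1
  simp [phig, wg]
  ring

private lemma hasDerivAt_phig (c t : ℝ) :
    HasDerivAt (phig c) ((2*c - 4*c^2*t^2) * Real.exp (-c*t^2)) t := by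
  have h1 : HasDerivAt (fun s : ℝ => -c * s^2) (-c * (2*t)) t := by
    simpa using (((hasDerivAt_pow 2 t)).const_mul (-c))
  have h2 := h1.exp
  have h4 : HasDerivAt (fun s : ℝ => 2*c*s) (2*c) t := by
    simpa using (hasDerivAt_id t).const_mul (2*c)
  have h5 : HasDerivAt (phig c) (2*c*Real.exp (-c*t^2) + 2*c*t*(Real.exp (-c*t^2) * (-c*(2*t)))) t := h4.mul h2
  convert h5 using 1
  ring

private lemma cont_phig (c : ℝ) : Continuous (phig c) := by
  unfold phig; continuity

private lemma cont_Bg (c : ℝ) : Continuous (Bg c) := by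
  unfold Bg; continuity

private lemma Bg_nonneg (c t : ℝ) (hc : 0 < c) : 0 ≤ Bg c t := by
  unfold Bg; positivity

private lemma phig_deriv_bound (c t : ℝ) (hc : 0 < c) :
    |(2*c - 4*c^2*t^2) * Real.exp (-c*t^2)| ≤ Bg c t := by
  have hx : ∀ x : ℝ, 0 ≤ x → x * Real.exp (-x) ≤ 1 := by
    intro x hx
    have h1 : Real.exp x * Real.exp (-x) = 1 := by rw [← Real.exp_add]; simp
    nlinarith [Real.add_one_le_exp x, Real.exp_pos (-x)]
  have hsplit : Real.exp (-c*t^2) = Real.exp (-(c/2)*t^2) * Real.exp (-(c/2)*t^2) := by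
    rw [← Real.exp_add]; ring_nf
  have hle1 : Real.exp (-(c/2)*t^2) ≤ 1 := by
    apply Real.exp_le_one_iff.mpr; nlinarith [sq_nonneg t]
  have hkey : (c/2*t^2) * Real.exp (-(c/2*t^2)) ≤ 1 := hx _ (by positivity)
  rw [abs_mul, Real.abs_exp]
  have h2 : |2*c - 4*c^2*t^2| ≤ 2*c + 4*c^2*t^2 := by
    have := abs_sub (2*c) (4*c^2*t^2)
    calc |2*c - 4*c^2*t^2| ≤ |2*c| + |4*c^2*t^2| := abs_sub _ _
      _ = 2*c + 4*c^2*t^2 := by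
        rw [_root_.abs_of_nonneg (by positivity), _root_.abs_of_nonneg (by positivity)]
  unfold Bg
  set E := Real.exp (-(c/2)*t^2) with hE
  have hexp_pos : 0 < E := Real.exp_pos _
  have h3 : (-(c/2*t^2)) = (-(c/2)*t^2) := by ring
  rw [h3] at hkey
  rw [hsplit]
  calc |2*c - 4*c^2*t^2| * (E * E) ≤ (2*c + 4*c^2*t^2) * (E * E) := by
        nlinarith [mul_pos hexp_pos hexp_pos]
    _ = 2*c*E*E + 8*c*((c/2*t^2)*E)*E := by ring
    _ ≤ 2*c*1*E + 8*c*(1:ℝ)*E := by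
        have h4 : (c/2*t^2)*E ≤ 1 := hkey
        have h5 : 2*c*E*E ≤ 2*c*1*E := by nlinarith [mul_le_mul_of_nonneg_left hle1 (by positivity : (0:ℝ) ≤ 2*c*E)]
        have h6 : 8*c*((c/2*t^2)*E)*E ≤ 8*c*(1:ℝ)*E := by
          have := mul_le_mul_of_nonneg_right h4 (mul_nonneg (by linarith : (0:ℝ) ≤ 8*c) hexp_pos.le)
          nlinarith
        linarith
    _ = 10*c*E := by ring

private lemma Bg_intervalIntegrable (c x y : ℝ) : IntervalIntegrable (Bg c) volume x y :=
  (cont_Bg c).intervalIntegrable x y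

private lemma osc_phig (c p : ℝ) (hc : 0 < c) (hp : 0 < p) (u t : ℝ) (hut : u ≤ t)
    (htu : t ≤ u + 2*p) : |phig c t - phig c u| ≤ ∫ s in u..(u+2*p), Bg c s := by
  have hcontd : Continuous fun s : ℝ => (2*c - 4*c^2*s^2) * Real.exp (-c*s^2) := by continuity
  have h1 : (∫ s in u..t, (2*c - 4*c^2*s^2) * Real.exp (-c*s^2)) = phig c t - phig c u :=
    integral_eq_sub_of_hasDerivAt (fun s _ => hasDerivAt_phig c s)
      (hcontd.intervalIntegrable _ _)
  rw [← h1]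
  have h2 : |∫ s in u..t, (2*c - 4*c^2*s^2) * Real.exp (-c*s^2)|
      ≤ ∫ s in u..t, |(2*c - 4*c^2*s^2) * Real.exp (-c*s^2)| := by
    have h2' := intervalIntegral.norm_integral_le_integral_norm
      (f := fun s : ℝ => (2*c - 4*c^2*s^2) * Real.exp (-c*s^2)) (μ := volume) hut
    simp only [Real.norm_eq_abs] at h2'
    exact h2'
  have h3 : (∫ s in u..t, |(2*c - 4*c^2*s^2) * Real.exp (-c*s^2)|) ≤ ∫ s in u..t, Bg c s :=
    intervalIntegral.integral_mono_on hut ((hcontd.abs).intervalIntegrable _ _)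
      (Bg_intervalIntegrable c u t) (fun x _ => phig_deriv_bound c x hc)
  have h4 : (∫ s in u..t, Bg c s) ≤ ∫ s in u..(u+2*p), Bg c s :=
    intervalIntegral.integral_mono_interval le_rfl hut htu
      (Filter.Eventually.of_forall (fun x => Bg_nonneg c x hc)) (Bg_intervalIntegrable c _ _)
  exact h2.trans (h3.trans h4)

private lemma per_period (c p α : ℝ) (hc : 0 < c) (hp : 0 < p) (hα : 0 < α) (hαp : α < p)
    (k : ℕ) :
    |(wg c (α+2*p*k) - wg c (2*p-α+2*p*k)) - (1-α/p)*(wg c (2*p*k) - wg c (2*p*k+2*p))|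
      ≤ 4*p*(Dg c p k) := by
  set u : ℝ := 2*p*(k:ℝ) with hu
  have hu0 : (0:ℝ) ≤ u := by positivity
  have hint : ∀ x y : ℝ, wg c x - wg c y = ∫ t in x..y, phig c t := by
    intro x y
    rw [integral_eq_sub_of_hasDerivAt (fun t _ => hasDerivAt_neg_wg c t)
      ((cont_phig c).intervalIntegrable _ _)]
    ring
  have hsplit : ∀ x y : ℝ, (∫ t in x..y, phig c t)
      = (∫ t in x..y, (phig c t - phig c u)) + (y - x) * phig c u := by
    intro x y
    rw [intervalIntegral.integral_sub ((cont_phig c).intervalIntegrable _ _)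
      intervalIntegrable_const, intervalIntegral.integral_const]
    simp only [smul_eq_mul]
    ring
  have e1 : α + 2*p*(k:ℝ) = α + u := by rw [hu]
  have e2 : 2*p-α+2*p*(k:ℝ) = (2*p-α) + u := by rw [hu]; try ring
  have e3 : 2*p*(k:ℝ)+2*p = u + 2*p := by rw [hu]
  rw [e1, e2, e3, hint (α+u) (2*p-α+u), hint u (u+2*p), hsplit (α+u) (2*p-α+u), hsplit u (u+2*p)]
  set I1 := ∫ t in (α+u)..(2*p-α+u), (phig c t - phig c u) with hI1
  set I2 := ∫ t in u..(u+2*p), (phig c t - phig c u) with hI2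
  set m := 1 - α/p with hm
  have hm0 : 0 ≤ m := by
    rw [hm]
    have h := (div_le_one hp).mpr (le_of_lt hαp)
    linarith
  have hm1 : m ≤ 1 := by
    rw [hm]
    have h : 0 < α/p := by positivity
    linarith
  have hcancel : (I1 + (2*p-α+u - (α+u)) * phig c u) - m * (I2 + (u+2*p-u) * phig c u)
      = I1 - m * I2 := by
    rw [hm]; field_simp; ring
  rw [hcancel]
  set D := Dg c p k with hD
  have hDeq : D = ∫ s in u..(u+2*p), Bg c s := by rw [hD, hu]; rfl
  have hD0 : 0 ≤ D := by
    rw [hDeq]; exact intervalIntegral.integral_nonneg (by linarith) (fun x _ => Bg_nonneg c x hc)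
  have hb1 : |I1| ≤ D * |(2*p-α+u) - (α+u)| := by
    rw [hI1, ← Real.norm_eq_abs, hDeq]
    apply intervalIntegral.norm_integral_le_of_norm_le_const
    intro x hx
    rw [Set.uIoc_of_le (by linarith)] at hx
    rw [Real.norm_eq_abs, ← hDeq]
    rw [hDeq]
    exact osc_phig c p hc hp u x (by linarith [hx.1]) (by linarith [hx.2])
  have hb2 : |I2| ≤ D * |(u+2*p) - u| := by
    rw [hI2, ← Real.norm_eq_abs, hDeq]
    apply intervalIntegral.norm_integral_le_of_norm_le_const
    intro x hx
    rw [Set.uIoc_of_le (by linarith)] at hx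
    rw [Real.norm_eq_abs]
    exact osc_phig c p hc hp u x (by linarith [hx.1]) (by linarith [hx.2])
  have hs1 : |(2*p-α+u) - (α+u)| = 2*p - 2*α := by rw [_root_.abs_of_nonneg (by linarith)]; ring
  have hs2 : |(u+2*p) - u| = 2*p := by rw [_root_.abs_of_nonneg (by linarith)]; ring
  rw [hs1] at hb1; rw [hs2] at hb2
  calc |I1 - m*I2| ≤ |I1| + m*|I2| := by
        have := abs_sub I1 (m*I2)
        rw [abs_mul, _root_.abs_of_nonneg hm0] at this
        exact this
    _ ≤ D*(2*p-2*α) + 1*(D*(2*p)) := by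
        have := mul_le_mul hm1 hb2 (abs_nonneg _) (by norm_num)
        nlinarith [mul_le_mul_of_nonneg_left hb2 hm0]
    _ ≤ 4*p*D := by nlinarith

private lemma Dg_nonneg (c p : ℝ) (hc : 0 < c) (hp : 0 < p) (k : ℕ) : 0 ≤ Dg c p k :=
  intervalIntegral.integral_nonneg (by linarith : (2*p*(k:ℝ)) ≤ 2*p*(k:ℝ)+2*p)
    (fun x _ => Bg_nonneg c x hc)

private lemma Dg_partial_sum (c p : ℝ) (hc : 0 < c) (hp : 0 < p) (n : ℕ) :
    ∑ k ∈ Finset.range n, Dg c p k ≤ 15 * Real.sqrt c := by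
  have hadj : ∑ k ∈ Finset.range n, Dg c p k = ∫ t in (0:ℝ)..(2*p*(n:ℝ)), Bg c t := by
    have h := intervalIntegral.sum_integral_adjacent_intervals
      (a := fun k : ℕ => 2*p*(k:ℝ)) (n := n) (f := Bg c) (μ := volume)
      (fun k _ => Bg_intervalIntegrable c _ _)
    calc ∑ k ∈ Finset.range n, Dg c p k
        = ∑ k ∈ Finset.range n, ∫ x in ((fun k : ℕ => 2*p*(k:ℝ)) k)..((fun k : ℕ => 2*p*(k:ℝ)) (k+1)), Bg c x := by
          apply Finset.sum_congr rfl
          intro k _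
          unfold Dg
          congr 1
          push_cast
          ring
      _ = ∫ x in ((fun k : ℕ => 2*p*(k:ℝ)) 0)..((fun k : ℕ => 2*p*(k:ℝ)) n), Bg c x := h
      _ = ∫ t in (0:ℝ)..(2*p*(n:ℝ)), Bg c t := by norm_num
  rw [hadj]
  have h0n : (0:ℝ) ≤ 2*p*(n:ℝ) := by positivity
  have hIoc : (∫ t in (0:ℝ)..(2*p*(n:ℝ)), Bg c t) = ∫ t in Set.Ioc (0:ℝ) (2*p*(n:ℝ)), Bg c t :=
    intervalIntegral.integral_of_le h0n
  have hint : Integrable (fun t : ℝ => Real.exp (-(c/2)*t^2)) volume := integrable_exp_neg_mul_sq (by linarith)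
  have hintB : IntegrableOn (Bg c) (Set.Ioi (0:ℝ)) volume := by
    unfold Bg
    exact ((hint.const_mul (10*c)).restrict)
  have hmono : (∫ t in Set.Ioc (0:ℝ) (2*p*(n:ℝ)), Bg c t) ≤ ∫ t in Set.Ioi (0:ℝ), Bg c t := by
    apply MeasureTheory.setIntegral_mono_set hintB
      (Filter.Eventually.of_forall (fun x => Bg_nonneg c x hc))
      (Filter.Eventually.of_forall (fun x hx => Set.Ioc_subset_Ioi_self hx))
  have hval : (∫ t in Set.Ioi (0:ℝ), Bg c t) = 10*c*(Real.sqrt (π/(c/2))/2) := by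
    unfold Bg
    rw [MeasureTheory.integral_const_mul]
    rw [integral_gaussian_Ioi]
  have hfin : 10*c*(Real.sqrt (π/(c/2))/2) ≤ 15 * Real.sqrt c := by
    have hc2 : (0:ℝ) < c/2 := by linarith
    have h1 : c * Real.sqrt (π/(c/2)) = Real.sqrt (c^2 * (π/(c/2))) := by
      rw [Real.sqrt_mul (sq_nonneg c), Real.sqrt_sq hc.le]
    have h2 : c^2 * (π/(c/2)) = 2*π*c := by field_simp
    have h3 : Real.sqrt (2*π*c) ≤ Real.sqrt (9*c) := by
      apply Real.sqrt_le_sqrt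
      nlinarith [Real.pi_le_four]
    have h4 : Real.sqrt (9*c) = 3 * Real.sqrt c := by
      rw [show (9:ℝ)*c = 3^2*c by ring, Real.sqrt_mul (by norm_num : (0:ℝ) ≤ (3:ℝ)^2),
        Real.sqrt_sq (by norm_num : (0:ℝ) ≤ (3:ℝ))]
    have : c * Real.sqrt (π/(c/2)) ≤ 3 * Real.sqrt c := by
      rw [h1, h2]; exact h3.trans (le_of_eq h4)
    nlinarith [Real.sqrt_nonneg (π/(c/2)), hc]
  rw [hIoc] at *
  linarith

private lemma summable_shift (c p β : ℝ) (hc : 0 < c) (hp : 0 < p) (hβ : 0 ≤ β) :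
    Summable (fun k : ℕ => Real.exp (-c*(β+2*p*(k:ℝ))^2)) := by
  have hr1 : Real.exp (-(4*p^2*c)) < 1 := by
    apply Real.exp_lt_one_iff.mpr
    have : (0:ℝ) < 4*p^2*c := by positivity
    linarith
  apply Summable.of_nonneg_of_le (fun k => (Real.exp_pos _).le)
    (fun k => ?_) (summable_geometric_of_lt_one (Real.exp_pos _).le hr1)
  rw [← Real.exp_nat_mul]
  apply Real.exp_le_exp.mpr
  have hk : (k:ℝ) ≤ (k:ℝ)^2 := by
    have := Nat.le_self_pow (two_ne_zero) k
    exact_mod_cast this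
  have h1 : 4*p^2*c*(k:ℝ) ≤ 4*p^2*c*(k:ℝ)^2 := mul_le_mul_of_nonneg_left hk (by positivity)
  have h2 : (0:ℝ) ≤ 4*p*(k:ℝ)*β := by
    apply mul_nonneg (by positivity) hβ
  nlinarith [sq_nonneg β, h1, h2, mul_nonneg (mul_nonneg hc.le (by positivity : (0:ℝ) ≤ 4*p*(k:ℝ))) hβ,
    mul_nonneg hc.le (sq_nonneg β)]

private lemma tele_hasSum (c p : ℝ) (hc : 0 < c) (hp : 0 < p) :
    HasSum (fun k : ℕ => wg c (2*p*(k:ℝ)) - wg c (2*p*(k:ℝ)+2*p)) 1 := by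
  have hmatch : ∀ k : ℕ, wg c (2*p*(k:ℝ)) - wg c (2*p*(k:ℝ)+2*p)
      = (fun k : ℕ => wg c (2*p*(k:ℝ))) k - (fun k : ℕ => wg c (2*p*(k:ℝ))) (k+1) := by
    intro k
    simp only
    congr 2
    push_cast
    ring
  have hpartial : ∀ n : ℕ, ∑ k ∈ Finset.range n, (wg c (2*p*(k:ℝ)) - wg c (2*p*(k:ℝ)+2*p))
      = 1 - wg c (2*p*(n:ℝ)) := by
    intro n
    rw [Finset.sum_congr rfl (fun k _ => hmatch k), Finset.sum_range_sub' (fun k : ℕ => wg c (2*p*(k:ℝ))) n]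
    unfold wg
    norm_num
  have hnonneg : ∀ k : ℕ, 0 ≤ wg c (2*p*(k:ℝ)) - wg c (2*p*(k:ℝ)+2*p) := by
    intro k
    unfold wg
    have hkk : (0:ℝ) ≤ (k:ℝ) := Nat.cast_nonneg k
    have : -c*(2*p*(k:ℝ)+2*p)^2 ≤ -c*(2*p*(k:ℝ))^2 := by
      nlinarith [mul_nonneg (mul_nonneg hc.le (mul_nonneg hp.le hp.le)) hkk,
        mul_nonneg hc.le (mul_nonneg hp.le hp.le)]
    linarith [Real.exp_le_exp.mpr this]
  have hsummable : Summable (fun k : ℕ => wg c (2*p*(k:ℝ)) - wg c (2*p*(k:ℝ)+2*p)) := by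
    apply summable_of_sum_range_le (c := 1) hnonneg
    intro n
    rw [hpartial n]
    have h := Real.exp_pos (-c*(2*p*(n:ℝ))^2)
    unfold wg
    linarith
  have hlim0 : Filter.Tendsto (fun n : ℕ => wg c (2*p*(n:ℝ))) Filter.atTop (nhds 0) := by
    have hr1 : Real.exp (-(4*p^2*c)) < 1 := by
      apply Real.exp_lt_one_iff.mpr
      have : (0:ℝ) < 4*p^2*c := by positivity
      linarith
    apply squeeze_zero_norm (a := fun n : ℕ => (Real.exp (-(4*p^2*c)))^n)
      (fun n => ?_) (tendsto_pow_atTop_nhds_zero_of_lt_one (Real.exp_pos _).le hr1)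
    show ‖wg c (2*p*(n:ℝ))‖ ≤ Real.exp (-(4*p^2*c)) ^ n
    unfold wg
    rw [Real.norm_eq_abs, _root_.abs_of_nonneg (Real.exp_pos _).le, ← Real.exp_nat_mul]
    apply Real.exp_le_exp.mpr
    have hk : (n:ℝ) ≤ (n:ℝ)^2 := by
      exact_mod_cast Nat.le_self_pow (two_ne_zero) n
    nlinarith [mul_le_mul_of_nonneg_left hk (by positivity : (0:ℝ) ≤ 4*p^2*c)]
  have h1 := hsummable.hasSum
  have h2 := h1.tendsto_sum_nat
  have h3 : Filter.Tendsto (fun n : ℕ => ∑ k ∈ Finset.range n,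
      (wg c (2*p*(k:ℝ)) - wg c (2*p*(k:ℝ)+2*p))) Filter.atTop (nhds 1) := by
    simp only [hpartial]
    simpa using tendsto_const_nhds.sub hlim0
  rwa [tendsto_nhds_unique h2 h3] at h1

set_option maxHeartbeats 1000000 in
private lemma key_est (p α c : ℝ) (hp : 0 < p) (hα : 0 < α) (hαp : α < p) (hc : 0 < c) :
    |(∑' k : ℕ, (Real.exp (-c*(α+2*p*(k:ℝ))^2) - Real.exp (-c*(2*p-α+2*p*(k:ℝ))^2))) - (1 - α/p)|
      ≤ 60 * p * Real.sqrt c := by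
  obtain ⟨f, hf⟩ : ∃ f : ℕ → ℝ, f = fun k : ℕ => wg c (α+2*p*(k:ℝ)) - wg c (2*p-α+2*p*(k:ℝ)) := ⟨_, rfl⟩
  obtain ⟨g, hg⟩ : ∃ g : ℕ → ℝ, g = fun k : ℕ => (1-α/p) * (wg c (2*p*(k:ℝ)) - wg c (2*p*(k:ℝ)+2*p)) := ⟨_, rfl⟩
  obtain ⟨D, hD⟩ : ∃ D : ℕ → ℝ, D = fun k : ℕ => Dg c p k := ⟨_, rfl⟩
  have hgoal : (fun k : ℕ => Real.exp (-c*(α+2*p*(k:ℝ))^2) - Real.exp (-c*(2*p-α+2*p*(k:ℝ))^2)) = f := by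
    rw [hf]; rfl
  rw [hgoal]
  have hsa : Summable (fun k : ℕ => wg c (α+2*p*(k:ℝ))) :=
    summable_shift c p α hc hp hα.le
  have hsb : Summable (fun k : ℕ => wg c (2*p-α+2*p*(k:ℝ))) :=
    summable_shift c p (2*p-α) hc hp (by linarith)
  have hmain : Summable f := by rw [hf]; exact hsa.sub hsb
  have hteleM : HasSum g (1-α/p) := by
    rw [hg]
    simpa using (tele_hasSum c p hc hp).mul_left (1-α/p)
  have hdiff : (∑' k : ℕ, f k) - (1 - α/p) = ∑' k : ℕ, (f k - g k) := by
    rw [Summable.tsum_sub hmain hteleM.summable, hteleM.tsum_eq]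
  rw [hdiff]
  have hterm : ∀ k : ℕ, |f k - g k| ≤ 4*p*(D k) := by
    intro k
    rw [hf, hg, hD]
    exact per_period c p α hc hp hα hαp k
  have hDnonneg : ∀ k : ℕ, 0 ≤ D k := by
    intro k; rw [hD]; exact Dg_nonneg c p hc hp k
  have hDpartial : ∀ n : ℕ, ∑ k ∈ Finset.range n, D k ≤ 15 * Real.sqrt c := by
    intro n; rw [hD]; exact Dg_partial_sum c p hc hp n
  have hDsummable : Summable (fun k : ℕ => 4*p*(D k)) :=
    (summable_of_sum_range_le hDnonneg hDpartial).mul_left _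
  have hnormsummable : Summable (fun k : ℕ => |f k - g k|) :=
    Summable.of_nonneg_of_le (fun k => abs_nonneg _) hterm hDsummable
  calc |∑' k : ℕ, (f k - g k)|
      ≤ ∑' k : ℕ, |f k - g k| := by
        have h2 : Summable (fun k : ℕ => ‖f k - g k‖) := by
          simpa [Real.norm_eq_abs] using hnormsummable
        have h3 := norm_tsum_le_tsum_norm h2
        simpa [Real.norm_eq_abs] using h3
    _ ≤ ∑' k : ℕ, 4*p*(D k) := Summable.tsum_le_tsum hterm hnormsummable hDsummable
    _ = 4*p* ∑' k : ℕ, D k := tsum_mul_left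
    _ ≤ 4*p*(15 * Real.sqrt c) := by
        apply mul_le_mul_of_nonneg_left _ (by linarith : (0:ℝ) ≤ 4*p)
        exact Real.tsum_le_of_sum_range_le hDnonneg hDpartial
    _ = 60 * p * Real.sqrt c := by ring

private lemma tendsto_key (p α : ℝ) (hp1 : 1 ≤ p) (hα : 0 < α) (hαp : α < p) :
    Filter.Tendsto (fun ε : ℝ => ∑' k : ℕ,
      (Real.exp (-(π*ε/(2*p))*(α+2*p*(k:ℝ))^2) - Real.exp (-(π*ε/(2*p))*(2*p-α+2*p*(k:ℝ))^2)))
      (nhdsWithin 0 (Set.Ioi 0)) (nhds (1 - α/p)) := by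
  have hp : 0 < p := by linarith
  have hsqrt2 : Real.sqrt 2 ≤ 2 := by
    nlinarith [Real.sq_sqrt (by norm_num : (0:ℝ) ≤ 2), Real.sqrt_nonneg 2]
  have hbound : ∀ ε : ℝ, ε ∈ Set.Ioi (0:ℝ) →
      ‖(∑' k : ℕ, (Real.exp (-(π*ε/(2*p))*(α+2*p*(k:ℝ))^2)
          - Real.exp (-(π*ε/(2*p))*(2*p-α+2*p*(k:ℝ))^2))) - (1 - α/p)‖ ≤ 120*p*Real.sqrt ε := by
    intro ε hε
    rw [Set.mem_Ioi] at hε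
    have hc : 0 < π*ε/(2*p) := by
      have := Real.pi_pos
      positivity
    have h1 := key_est p α (π*ε/(2*p)) hp hα hαp hc
    have h2 : Real.sqrt (π*ε/(2*p)) ≤ Real.sqrt (2*ε) := by
      apply Real.sqrt_le_sqrt
      rw [div_le_iff₀ (by linarith : (0:ℝ) < 2*p)]
      nlinarith [Real.pi_le_four]
    have h3 : Real.sqrt (2*ε) = Real.sqrt 2 * Real.sqrt ε := Real.sqrt_mul (by norm_num) ε
    have h4 : Real.sqrt 2 * Real.sqrt ε ≤ 2 * Real.sqrt ε :=
      mul_le_mul_of_nonneg_right hsqrt2 (Real.sqrt_nonneg ε)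
    rw [Real.norm_eq_abs]
    calc |(∑' k : ℕ, (Real.exp (-(π*ε/(2*p))*(α+2*p*(k:ℝ))^2)
          - Real.exp (-(π*ε/(2*p))*(2*p-α+2*p*(k:ℝ))^2))) - (1 - α/p)|
        ≤ 60 * p * Real.sqrt (π*ε/(2*p)) := h1
      _ ≤ 60 * p * (2 * Real.sqrt ε) := by
          apply mul_le_mul_of_nonneg_left _ (by linarith : (0:ℝ) ≤ 60*p)
          linarith [h2, h3 ▸ h4]
      _ = 120*p*Real.sqrt ε := by ring
  have h0 : Filter.Tendsto (fun ε : ℝ => 120*p*Real.sqrt ε) (nhdsWithin 0 (Set.Ioi 0)) (nhds 0) := by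
    have hcont : Continuous fun ε : ℝ => 120*p*Real.sqrt ε := by continuity
    have := hcont.tendsto 0
    simp only [Real.sqrt_zero, mul_zero] at this
    exact this.mono_left nhdsWithin_le_nhds
  have hsq : Filter.Tendsto (fun ε : ℝ => (∑' k : ℕ, (Real.exp (-(π*ε/(2*p))*(α+2*p*(k:ℝ))^2)
      - Real.exp (-(π*ε/(2*p))*(2*p-α+2*p*(k:ℝ))^2))) - (1 - α/p))
      (nhdsWithin 0 (Set.Ioi 0)) (nhds 0) := by
    apply squeeze_zero_norm' _ h0
    filter_upwards [eventually_mem_nhdsWithin] with ε hε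
    exact hbound ε hε
  have := hsq.add_const (1 - α/p)
  simpa using this

private lemma resid_pos (P : ℕ) (hP : 0 < P) (a : ℤ) (ha : 0 < a) (haP : a < P) (n : ℕ) :
    ((n:ℤ) : ZMod (2*P)) = ((a:ℤ) : ZMod (2*P)) ↔ ∃ k : ℕ, n = a.toNat + 2*P*k := by
  rw [ZMod.intCast_eq_intCast_iff]
  rw [Int.ModEq]
  constructor
  · intro h
    have hdvd : ((2*P : ℕ):ℤ) ∣ a - n := Int.ModEq.dvd h
    obtain ⟨t, ht⟩ := hdvd
    have hPz : (0:ℤ) < 2*(P:ℤ) := by positivity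
    have ht1 : t < 1 := by
      by_contra hcon
      push_neg at hcon
      have : 2*(P:ℤ)*1 ≤ 2*(P:ℤ)*t := mul_le_mul_of_nonneg_left hcon (by linarith)
      have hn : (0:ℤ) ≤ (n:ℤ) := Int.natCast_nonneg n
      push_cast at ht
      nlinarith
    refine ⟨(-t).toNat, ?_⟩
    have htn : (0:ℤ) ≤ -t := by linarith
    have : (n:ℤ) = (a.toNat : ℤ) + 2*(P:ℤ)*((-t).toNat : ℤ) := by
      rw [Int.toNat_of_nonneg ha.le, Int.toNat_of_nonneg htn]
      push_cast at ht
      linarith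
    exact_mod_cast this
  · rintro ⟨k, rfl⟩
    apply Int.ModEq.symm
    apply Int.modEq_iff_dvd.mpr
    refine ⟨(k:ℤ), ?_⟩
    push_cast [Int.toNat_of_nonneg ha.le]
    ring

private lemma resid_neg (P : ℕ) (hP : 0 < P) (a : ℤ) (ha : 0 < a) (haP : a < P) (n : ℕ) :
    ((n:ℤ) : ZMod (2*P)) = ((-a:ℤ) : ZMod (2*P)) ↔ ∃ k : ℕ, n = (2*P - a.toNat) + 2*P*k := by
  have hA2P : a.toNat ≤ 2*P := by omega
  rw [ZMod.intCast_eq_intCast_iff]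
  rw [Int.ModEq]
  constructor
  · intro h
    have hdvd : ((2*P : ℕ):ℤ) ∣ (-a) - n := Int.ModEq.dvd h
    obtain ⟨t, ht⟩ := hdvd
    have hPz : (0:ℤ) < 2*(P:ℤ) := by positivity
    have ht1 : t < 0 := by
      by_contra hcon
      push_neg at hcon
      have : (0:ℤ) ≤ 2*(P:ℤ)*t := mul_nonneg (by linarith) hcon
      have hn : (0:ℤ) ≤ (n:ℤ) := Int.natCast_nonneg n
      push_cast at ht
      nlinarith
    refine ⟨(-t-1).toNat, ?_⟩
    have htn : (0:ℤ) ≤ -t-1 := by linarith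
    have hcast : (n:ℤ) = ((2*P - a.toNat : ℕ) : ℤ) + 2*(P:ℤ)*((-t-1).toNat : ℤ) := by
      rw [Int.toNat_of_nonneg htn]
      push_cast [hA2P, Int.toNat_of_nonneg ha.le]
      push_cast at ht
      linarith
    exact_mod_cast hcast
  · rintro ⟨k, rfl⟩
    apply Int.ModEq.symm
    apply Int.modEq_iff_dvd.mpr
    refine ⟨(k:ℤ)+1, ?_⟩
    push_cast [hA2P, Int.toNat_of_nonneg ha.le]
    ring

private lemma resid_ne (P : ℕ) (hP : 0 < P) (a : ℤ) (ha : 0 < a) (haP : a < P) :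
    ¬ (((a:ℤ) : ZMod (2*P)) = ((-a:ℤ) : ZMod (2*P))) := by
  rw [ZMod.intCast_eq_intCast_iff]
  intro h
  have hdvd : ((2*P : ℕ):ℤ) ∣ (-a) - a := Int.ModEq.dvd h
  have hdvd2 : ((2*P : ℕ):ℤ) ∣ 2*a := by
    have h2 : ((2*P : ℕ):ℤ) ∣ -(-a - a) := Dvd.dvd.neg_right hdvd
    simpa [two_mul] using h2
  have hle := Int.le_of_dvd (by linarith) hdvd2
  push_cast at hle
  linarith

/-- The odd periodic function `ψ_{2P}^{(a)}` of modulus `2P` : it is `1` on integers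
congruent to `a`, `-1` on integers congruent to `-a`, and `0` otherwise. -/
def psi (P : ℕ) (a n : ℤ) : ℤ :=
  if (n : ZMod (2 * P)) = (a : ZMod (2 * P)) then 1
  else if (n : ZMod (2 * P)) = ((-a : ℤ) : ZMod (2 * P)) then -1
  else 0

set_option maxHeartbeats 1000000 in
/-- for a positive integer `P`, any integer `N`, and an integer `a` with
`0 < a < P`, the radial limit `lim_{ε→0⁺} ∑_{n=0}^{∞} ψ_{2P}^{(a)}(n) e^{iπn²(N + iε)/(2P)}`
exists and equals `(1 − a/P) e^{iπa²N/(2P)}`. -/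
theorem eichler_radial_limit_at_integer (P : ℕ) (hP : 0 < P) (N a : ℤ)
    (ha : 0 < a) (haP : a < P) :
    Filter.Tendsto
      (fun ε : ℝ => ∑' n : ℕ,
        (psi P a n : ℂ) *
          Complex.exp (Real.pi * I * (n : ℂ) ^ 2 * ((N : ℂ) + I * ε) / (2 * P)))
      (nhdsWithin 0 (Set.Ioi 0))
      (nhds ((1 - (a : ℂ) / (P : ℂ)) *
        Complex.exp (Real.pi * I * (a : ℂ) ^ 2 * (N : ℂ) / (2 * P)))) := by
  have hPr : (0:ℝ) < (P:ℝ) := by exact_mod_cast hP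
  have hPr1 : (1:ℝ) ≤ (P:ℝ) := by exact_mod_cast hP
  have har : (0:ℝ) < (a:ℝ) := by exact_mod_cast ha
  have haPr : (a:ℝ) < (P:ℝ) := by exact_mod_cast haP
  have hAcast : ((a.toNat : ℤ)) = a := Int.toNat_of_nonneg ha.le
  have hAcastR : ((a.toNat : ℕ) : ℝ) = (a:ℝ) := by exact_mod_cast congrArg (fun z : ℤ => (z:ℝ)) hAcast
  have hA2P : a.toNat ≤ 2*P := by omega
  set E : ℂ := Complex.exp (Real.pi * Complex.I * (a : ℂ) ^ 2 * (N : ℂ) / (2 * (P:ℂ))) with hE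
  obtain ⟨Sfun, hSfun⟩ : ∃ S : ℝ → ℝ, S = fun ε : ℝ => ∑' k : ℕ,
      (Real.exp (-(π*ε/(2*(P:ℝ)))*((a:ℝ)+2*(P:ℝ)*(k:ℝ))^2)
        - Real.exp (-(π*ε/(2*(P:ℝ)))*(2*(P:ℝ)-(a:ℝ)+2*(P:ℝ)*(k:ℝ))^2)) := ⟨_, rfl⟩
  have hS : Filter.Tendsto Sfun (nhdsWithin 0 (Set.Ioi 0)) (nhds (1 - (a:ℝ)/(P:ℝ))) := by
    rw [hSfun]; exact tendsto_key (P:ℝ) (a:ℝ) hPr1 har haPr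
  have heq : ∀ ε : ℝ, ε ∈ Set.Ioi (0:ℝ) →
      (∑' n : ℕ, (psi P a n : ℂ) *
          Complex.exp (Real.pi * Complex.I * (n : ℂ) ^ 2 * ((N : ℂ) + Complex.I * ε) / (2 * P)))
        = E * ((Sfun ε : ℝ) : ℂ) := by
    intro ε hε
    rw [Set.mem_Ioi] at hε
    have hpi := Real.pi_pos
    have hc : (0:ℝ) < π*ε/(2*(P:ℝ)) := by positivity
    obtain ⟨c, hcdef⟩ : ∃ c : ℝ, c = π*ε/(2*(P:ℝ)) := ⟨_, rfl⟩
    obtain ⟨f1, hf1⟩ : ∃ f : ℕ → ℝ, f = fun n : ℕ =>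
        if ((n:ℤ) : ZMod (2*P)) = ((a:ℤ) : ZMod (2*P)) then Real.exp (-c*(n:ℝ)^2) else 0 := ⟨_, rfl⟩
    obtain ⟨f2, hf2⟩ : ∃ f : ℕ → ℝ, f = fun n : ℕ =>
        if ((n:ℤ) : ZMod (2*P)) = ((-a:ℤ) : ZMod (2*P)) then Real.exp (-c*(n:ℝ)^2) else 0 := ⟨_, rfl⟩
    have hcpos : 0 < c := hcdef ▸ hc
    have hsum1 : Summable (fun k : ℕ => Real.exp (-c*((a:ℝ)+2*(P:ℝ)*(k:ℝ))^2)) :=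
      summable_shift c (P:ℝ) (a:ℝ) hcpos hPr har.le
    have hsum2 : Summable (fun k : ℕ => Real.exp (-c*(2*(P:ℝ)-(a:ℝ)+2*(P:ℝ)*(k:ℝ))^2)) :=
      summable_shift c (P:ℝ) (2*(P:ℝ)-(a:ℝ)) hcpos hPr (by linarith)
    have h2Ppos : 0 < 2*P := by omega
    have hinj1 : Function.Injective (fun k : ℕ => a.toNat + 2*P*k) := by
      intro x y hxy
      simp only at hxy
      have h1 : 2*P*x = 2*P*y := by omega
      exact Nat.eq_of_mul_eq_mul_left h2Ppos h1
    have hinj2 : Function.Injective (fun k : ℕ => (2*P - a.toNat) + 2*P*k) := by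
      intro x y hxy
      simp only at hxy
      have h1 : 2*P*x = 2*P*y := by omega
      exact Nat.eq_of_mul_eq_mul_left h2Ppos h1
    have hras : HasSum f1 (∑' k : ℕ, Real.exp (-c*((a:ℝ)+2*(P:ℝ)*(k:ℝ))^2)) := by
      apply (Function.Injective.hasSum_iff hinj1 ?_).mp ?_
      · intro n hn
        rw [hf1]
        simp only
        rw [if_neg]
        intro hcond
        obtain ⟨k, hk⟩ := (resid_pos P hP a ha haP n).mp hcond
        exact hn ⟨k, hk.symm⟩
      · have hfun : (f1 ∘ (fun k : ℕ => a.toNat + 2*P*k))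
            = fun k : ℕ => Real.exp (-c*((a:ℝ)+2*(P:ℝ)*(k:ℝ))^2) := by
          funext k
          rw [hf1]
          simp only [Function.comp_apply]
          rw [if_pos ((resid_pos P hP a ha haP _).mpr ⟨k, rfl⟩)]
          congr 1
          push_cast [hAcastR]
          ring
        rw [hfun]
        exact hsum1.hasSum
    have hrbs : HasSum f2 (∑' k : ℕ, Real.exp (-c*(2*(P:ℝ)-(a:ℝ)+2*(P:ℝ)*(k:ℝ))^2)) := by
      apply (Function.Injective.hasSum_iff hinj2 ?_).mp ?_
      · intro n hn
        rw [hf2]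
        simp only
        rw [if_neg]
        intro hcond
        obtain ⟨k, hk⟩ := (resid_neg P hP a ha haP n).mp hcond
        exact hn ⟨k, hk.symm⟩
      · have hfun : (f2 ∘ (fun k : ℕ => (2*P - a.toNat) + 2*P*k))
            = fun k : ℕ => Real.exp (-c*(2*(P:ℝ)-(a:ℝ)+2*(P:ℝ)*(k:ℝ))^2) := by
          funext k
          rw [hf2]
          simp only [Function.comp_apply]
          rw [if_pos ((resid_neg P hP a ha haP _).mpr ⟨k, rfl⟩)]
          congr 1
          push_cast [Nat.cast_sub hA2P, hAcastR]
          ring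
        rw [hfun]
        exact hsum2.hasSum
    have hsplit : ∀ n : ℕ, (psi P a n : ℝ) * Real.exp (-c*(n:ℝ)^2) = f1 n - f2 n := by
      intro n
      rw [hf1, hf2]
      simp only
      unfold psi
      split_ifs with h1 h2
      · exact absurd (h1.symm.trans h2) (resid_ne P hP a ha haP)
      · push_cast; ring
      · push_cast; ring
      · push_cast; ring
    have hreal : HasSum (fun n : ℕ => (psi P a n : ℝ) * Real.exp (-c*(n:ℝ)^2)) (Sfun ε) := by
      have h := hras.sub hrbs
      have hfun : (fun n : ℕ => (psi P a n : ℝ) * Real.exp (-c*(n:ℝ)^2))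
          = fun n : ℕ => f1 n - f2 n := funext hsplit
      rw [hfun, hSfun]
      simp only
      rw [hcdef] at hsum1 hsum2 h
      rw [Summable.tsum_sub hsum1 hsum2]
      exact h
    have hterm : ∀ n : ℕ, (psi P a n : ℂ) *
        Complex.exp (Real.pi * Complex.I * (n:ℂ)^2 * ((N:ℂ) + Complex.I*ε) / (2*(P:ℂ)))
        = E * (((psi P a n : ℝ) * Real.exp (-c*(n:ℝ)^2) : ℝ) : ℂ) := by
      intro n
      by_cases hzero : psi P a n = 0
      · rw [hzero]
        push_cast
        ring
      · have hmem : ((n:ℤ) : ZMod (2*P)) = ((a:ℤ) : ZMod (2*P))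
            ∨ ((n:ℤ) : ZMod (2*P)) = ((-a:ℤ) : ZMod (2*P)) := by
          unfold psi at hzero
          split_ifs at hzero with h1 h2
          · exact Or.inl h1
          · exact Or.inr h2
          · exact absurd rfl hzero
        have hs : ∃ s : ℤ, (n:ℤ)^2 = a^2 + 4*(P:ℤ)*s := by
          rcases hmem with h | h
          · obtain ⟨k, hk⟩ := (resid_pos P hP a ha haP n).mp h
            refine ⟨a*k + P*k^2, ?_⟩
            rw [hk]
            push_cast [hAcast]
            ring
          · obtain ⟨k, hk⟩ := (resid_neg P hP a ha haP n).mp h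
            refine ⟨-a*(k+1) + P*(k+1)^2, ?_⟩
            rw [hk]
            push_cast [Nat.cast_sub hA2P, hAcast]
            ring
        obtain ⟨s, hs⟩ := hs
        have hP0 : ((P:ℂ)) ≠ 0 := Nat.cast_ne_zero.mpr hP.ne'
        have hn2 : ((n:ℕ):ℂ)^2 = (a:ℂ)^2 + 4*(P:ℂ)*(s:ℂ) := by
          exact_mod_cast congrArg (fun z : ℤ => (z:ℂ)) hs
        have hI2 : (Complex.I)^2 = -1 := Complex.I_sq
        have harg : (Real.pi : ℂ) * Complex.I * (n:ℂ)^2 * ((N:ℂ) + Complex.I*ε) / (2*(P:ℂ))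
            = (Real.pi : ℂ) * Complex.I * (a:ℂ)^2 * (N:ℂ) / (2*(P:ℂ))
              + ((s*N : ℤ):ℂ) * (2*(Real.pi:ℂ)*Complex.I)
              + ((-c*(n:ℝ)^2 : ℝ) : ℂ) := by
          rw [hcdef]
          push_cast
          field_simp
          linear_combination (Complex.I*(N:ℂ)) * hn2
            + ((n:ℂ)^2*(ε:ℂ)) * hI2
        rw [harg, Complex.exp_add, Complex.exp_add, Complex.exp_int_mul_two_pi_mul_I,
          ← Complex.ofReal_exp]
        rw [hE]
        push_cast
        ring
    calc (∑' n : ℕ, (psi P a n : ℂ) *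
          Complex.exp (Real.pi * Complex.I * (n : ℂ) ^ 2 * ((N : ℂ) + Complex.I * ε) / (2 * P)))
        = ∑' n : ℕ, E * (((psi P a n : ℝ) * Real.exp (-c*(n:ℝ)^2) : ℝ) : ℂ) := tsum_congr hterm
      _ = E * ((Sfun ε : ℝ) : ℂ) := by
          rw [tsum_mul_left]
          congr 1
          exact (Complex.hasSum_ofReal.mpr hreal).tsum_eq
  have hlim : Filter.Tendsto (fun ε : ℝ => E * ((Sfun ε : ℝ):ℂ)) (nhdsWithin 0 (Set.Ioi 0))
      (nhds (E * (((1 - (a:ℝ)/(P:ℝ)) : ℝ):ℂ))) := by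
    apply Filter.Tendsto.const_mul
    exact (Complex.continuous_ofReal.tendsto _).comp hS
  have hfinal : (E * (((1 - (a:ℝ)/(P:ℝ)) : ℝ):ℂ)) = (1 - (a:ℂ)/(P:ℂ)) * E := by
    push_cast
    ring
  rw [hfinal] at hlim
  apply hlim.congr'
  filter_upwards [eventually_mem_nhdsWithin] with ε hε
  exact (heq ε hε).symm
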